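/- The group GL(2, 𝔽₃) of invertible 2 × 2 matrices over the field with three elements has exactly one subgroup of index 2 (equivalently, exactly one subgroup of order 24). -/
import Mathlib

set_option maxRecDepth 10000

namespace GL2F3Aux

abbrev M2 := Matrix (Fin 2) (Fin 2) (ZMod 3)

def a0 : M2 := !![0,1;2,0]

set_option maxHeartbeats 4000000 in
lemma key : ∀ m : M2, m.det = 1 → ∃ b : M2, b * b = m ∨ a0 * a0 * (b * b) = m := by
  decide

/-- a diagonal unit hitting a given determinant -/
def dunit (y : (ZMod 3)ˣ) : GL (Fin 2) (ZMod 3) :=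
  Matrix.GeneralLinearGroup.mkOfDetNeZero !![(y : ZMod 3), 0; 0, 1]
    (by simp [Matrix.det_fin_two_of])

lemma det_dunit (y : (ZMod 3)ˣ) : Matrix.GeneralLinearGroup.det (dunit y) = y := by
  ext
  rw [Matrix.GeneralLinearGroup.val_det_apply]
  simp [dunit, Matrix.GeneralLinearGroup.mkOfDetNeZero, Matrix.GeneralLinearGroup.mk',
    Matrix.unitOfDetInvertible, Matrix.det_fin_two_of]

lemma det_surj : Function.Surjective (Matrix.GeneralLinearGroup.det :
    GL (Fin 2) (ZMod 3) →* (ZMod 3)ˣ) := fun y => ⟨dunit y, det_dunit y⟩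

noncomputable abbrev SL : Subgroup (GL (Fin 2) (ZMod 3)) :=
  (Matrix.GeneralLinearGroup.det : GL (Fin 2) (ZMod 3) →* (ZMod 3)ˣ).ker

lemma SL_index : SL.index = 2 := by
  rw [Subgroup.index_ker, MonoidHom.range_eq_top_of_surjective _ det_surj,
    Subgroup.card_top, Nat.card_eq_fintype_card]
  decide

lemma SL_le {H : Subgroup (GL (Fin 2) (ZMod 3))} (hH : H.index = 2) : SL ≤ H := by
  intro g hg
  have hg1 : Matrix.GeneralLinearGroup.det g = 1 := hg
  have hdet : (g : M2).det = 1 := by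
    have := congrArg (Units.val) hg1
    rwa [Matrix.GeneralLinearGroup.val_det_apply] at this
  obtain ⟨b, hb | hb⟩ := key (g : M2) hdet
  · have hbdet : b.det ≠ 0 := by
      intro h0
      have : ((b * b : M2)).det = 1 := by rw [hb, hdet]
      rw [Matrix.det_mul, h0, mul_zero] at this
      exact absurd this (by decide)
    set B := Matrix.GeneralLinearGroup.mkOfDetNeZero b hbdet with hB
    have hgB : g = B ^ 2 := by
      ext i j
      have : ((B ^ 2 : GL (Fin 2) (ZMod 3)) : M2) = b * b := by
        rw [sq]; rfl
      rw [this, hb]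
    rw [hgB]
    exact Subgroup.sq_mem_of_index_two hH B
  · have ha0 : (a0 : M2).det ≠ 0 := by decide
    have hbdet : b.det ≠ 0 := by
      intro h0
      have : ((a0 * a0 * (b * b) : M2)).det = 1 := by rw [hb, hdet]
      simp only [Matrix.det_mul, h0, mul_zero, zero_mul] at this
      exact absurd this (by decide)
    set A := Matrix.GeneralLinearGroup.mkOfDetNeZero a0 ha0 with hA
    set B := Matrix.GeneralLinearGroup.mkOfDetNeZero b hbdet with hB
    have hgAB : g = A ^ 2 * B ^ 2 := by
      ext i j
      have : ((A ^ 2 * B ^ 2 : GL (Fin 2) (ZMod 3)) : M2) = a0 * a0 * (b * b) := by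
        rw [sq, sq]; rfl
      rw [this, hb]
    rw [hgAB]
    exact mul_mem (Subgroup.sq_mem_of_index_two hH A) (Subgroup.sq_mem_of_index_two hH B)

end GL2F3Aux

/-- The group `GL(2, 𝔽₃)` has exactly one subgroup of index 2
(equivalently, exactly one subgroup of order 24). -/
theorem gl2_f3_unique_index_two_subgroup :
    ∃! H : Subgroup (GL (Fin 2) (ZMod 3)), H.index = 2 := by
  refine ⟨GL2F3Aux.SL, GL2F3Aux.SL_index, ?_⟩
  intro H hH
  have hle : GL2F3Aux.SL ≤ H := GL2F3Aux.SL_le hH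
  have hcard : Nat.card H = Nat.card GL2F3Aux.SL := by
    have h1 := H.index_mul_card
    have h2 := GL2F3Aux.SL.index_mul_card
    rw [hH] at h1
    rw [GL2F3Aux.SL_index] at h2
    omega
  exact (Subgroup.eq_of_le_of_card_ge hle hcard.le).symm
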